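/- arXiv:2302.01987 — 4 statements merged into one kernel-verified Lean document; each statement's English description precedes it below -/
import Mathlib

section
/- Let ζ > 0 and let F : ℝ → ℝ be a cumulative distribution function such that F(x) < 1 for every x ∈ ℝ (so the right endpoint of the support of F is τ = +∞), and write F̄ = 1 − F for the survival function. Then the following are equivalent: (i) there exist a sequence (a_n) of positive real numbers and a sequence (b_n) of real numbers such that for every x ∈ ℝ with 1 + ζx > 0, (F(a_n · x + b_n))^n converges to exp(−(1+ζx)^{−1/ζ}) as n → ∞; (ii) there exists a function δ : ℝ → ℝ with δ(η) > 0 for all sufficiently large η, such that for every x ∈ ℝ with 1 + ζx > 0, F̄(η + δ(η)·x) / F̄(η) converges to (1+ζx)^{−1/ζ} as η → +∞. -/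
open Filter Topology


lemma aux_log_slope : Tendsto (fun u : ℝ => Real.log u / (u - 1)) (𝓝[≠] (1:ℝ)) (𝓝 1) := by
  have h := (Real.hasDerivAt_log one_ne_zero)
  have h2 := hasDerivAt_iff_tendsto_slope.1 h
  simp only [inv_one] at h2
  refine h2.congr' ?_
  filter_upwards [self_mem_nhdsWithin] with u hu
  simp [slope_def_field, Real.log_one]

lemma aux_pow_of_mul {p : ℕ → ℝ} {c : ℝ} (hp1 : ∀ᶠ n in atTop, p n < 1)
    (h : Tendsto (fun n : ℕ => (n : ℝ) * (1 - p n)) atTop (𝓝 c)) :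
    Tendsto (fun n : ℕ => p n ^ n) atTop (𝓝 (Real.exp (-c))) := by
  have hinv : Tendsto (fun n : ℕ => ((n : ℝ))⁻¹) atTop (𝓝 0) :=
    tendsto_inv_atTop_zero.comp tendsto_natCast_atTop_atTop
  have h1 : Tendsto (fun n : ℕ => 1 - p n) atTop (𝓝 0) := by
    have := h.mul hinv
    rw [mul_zero] at this
    refine this.congr' ?_
    filter_upwards [eventually_ge_atTop 1] with n hn
    have hn' : ((n : ℝ)) ≠ 0 := by positivity
    field_simp
  have hp : Tendsto p atTop (𝓝 1) := by
    have := (tendsto_const_nhds (x := (1:ℝ)) (f := atTop)).sub h1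
    simpa using this
  have hslope : Tendsto (fun n : ℕ => Real.log (p n) / (p n - 1)) atTop (𝓝 1) := by
    refine aux_log_slope.comp (tendsto_nhdsWithin_iff.2 ⟨hp, ?_⟩)
    filter_upwards [hp1] with n hn
    exact ne_of_lt hn
  have hnlog : Tendsto (fun n : ℕ => (n : ℝ) * Real.log (p n)) atTop (𝓝 (-c)) := by
    have hm : Tendsto (fun n : ℕ => ((n : ℝ) * (p n - 1)) * (Real.log (p n) / (p n - 1)))
        atTop (𝓝 ((-c) * 1)) := by
      refine Tendsto.mul ?_ hslope
      have := h.neg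
      rw [← neg_zero] at *
      refine this.congr fun n => by ring
    rw [mul_one] at hm
    refine hm.congr' ?_
    filter_upwards [hp1] with n hn
    have : p n - 1 ≠ 0 := sub_ne_zero.2 (ne_of_lt hn)
    field_simp
  have hppos : ∀ᶠ n in atTop, 0 < p n := hp.eventually (eventually_gt_nhds one_pos)
  have := (Real.continuous_exp.tendsto _).comp hnlog
  refine this.congr' ?_
  filter_upwards [hppos] with n hn
  simp only [Function.comp]
  rw [Real.exp_nat_mul, Real.exp_log hn]

lemma aux_mul_of_pow {p : ℕ → ℝ} {L : ℝ} (hL : 0 < L) (hp1 : ∀ᶠ n in atTop, 0 ≤ p n ∧ p n < 1)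
    (h : Tendsto (fun n : ℕ => p n ^ n) atTop (𝓝 L)) :
    Tendsto (fun n : ℕ => (n : ℝ) * (1 - p n)) atTop (𝓝 (-Real.log L)) := by
  have hinv : Tendsto (fun n : ℕ => ((n : ℝ))⁻¹) atTop (𝓝 0) :=
    tendsto_inv_atTop_zero.comp tendsto_natCast_atTop_atTop
  have hppos : ∀ᶠ n in atTop, 0 < p n := by
    filter_upwards [hp1, h.eventually (eventually_gt_nhds (half_lt_self hL)),
      eventually_ge_atTop 1] with n h1 h2 h3
    rcases lt_or_eq_of_le h1.1 with h4 | h4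
    · exact h4
    · exfalso
      rw [← h4] at h2
      rw [zero_pow (by omega : n ≠ 0)] at h2
      linarith [half_pos hL]
  have hnlog : Tendsto (fun n : ℕ => (n : ℝ) * Real.log (p n)) atTop (𝓝 (Real.log L)) := by
    have := (Real.continuousAt_log (ne_of_gt hL)).tendsto.comp h
    refine this.congr' ?_
    filter_upwards [hppos] with n hn
    simp [Function.comp, Real.log_pow]
  have hlogp : Tendsto (fun n : ℕ => Real.log (p n)) atTop (𝓝 0) := by
    have := hnlog.mul hinv
    rw [mul_zero] at this
    refine this.congr' ?_
    filter_upwards [eventually_ge_atTop 1] with n hn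
    have hn' : ((n : ℝ)) ≠ 0 := by positivity
    field_simp
  have hp : Tendsto p atTop (𝓝 1) := by
    have := (Real.continuous_exp.tendsto _).comp hlogp
    rw [Real.exp_zero] at this
    refine this.congr' ?_
    filter_upwards [hppos] with n hn
    simp [Function.comp, Real.exp_log hn]
  have hslope : Tendsto (fun n : ℕ => Real.log (p n) / (p n - 1)) atTop (𝓝 1) := by
    refine aux_log_slope.comp (tendsto_nhdsWithin_iff.2 ⟨hp, ?_⟩)
    filter_upwards [hp1] with n hn
    exact ne_of_lt hn.2
  have hslope' : Tendsto (fun n : ℕ => (p n - 1) / Real.log (p n)) atTop (𝓝 1) := by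
    have := hslope.inv₀ one_ne_zero
    rw [inv_one] at this
    refine this.congr fun n => ?_
    rw [← one_div, one_div_div]
  have hm : Tendsto (fun n : ℕ => -(((n : ℝ) * Real.log (p n)) * ((p n - 1) / Real.log (p n))))
      atTop (𝓝 (-(Real.log L * 1))) := (hnlog.mul hslope').neg
  rw [mul_one] at hm
  refine hm.congr' ?_
  filter_upwards [hp1, hppos] with n hn hn'
  have hlne : Real.log (p n) ≠ 0 := by
    have : Real.log (p n) < 0 := Real.log_neg hn' hn.2
    linarith
  field_simp
  ring


lemma aux_Gcont (ζ : ℝ) {x : ℝ} (hx : 0 < 1 + ζ * x) :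
    ContinuousAt (fun u : ℝ => (1 + ζ * u) ^ (-1 / ζ)) x := by
  have h1 : ContinuousAt (fun u : ℝ => 1 + ζ * u) x := by fun_prop
  exact ContinuousAt.comp (f := fun u : ℝ => 1 + ζ * u)
    (Real.continuousAt_rpow_const _ _ (Or.inl (ne_of_gt hx))) h1

lemma aux_Glt1 (ζ : ℝ) (hζ : 0 < ζ) {e : ℝ} (he : 0 < e) :
    (1 + ζ * e) ^ (-1/ζ) < (1:ℝ) :=
  Real.rpow_lt_one_of_one_lt_of_neg (by nlinarith) (by
    rw [neg_div]; exact neg_neg_iff_pos.2 (by positivity))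

lemma aux_Ggt1 (ζ : ℝ) (hζ : 0 < ζ) {e : ℝ} (he : 0 < e) (h1 : 0 < 1 + ζ * (-e)) :
    (1:ℝ) < (1 + ζ * (-e)) ^ (-1/ζ) := by
  rw [Real.one_lt_rpow_iff_of_pos h1]
  exact Or.inr ⟨by nlinarith, by rw [neg_div]; exact neg_neg_iff_pos.2 (by positivity)⟩

lemma aux_Gpos (ζ : ℝ) {x : ℝ} (hx : 0 < 1 + ζ * x) : (0:ℝ) < (1 + ζ * x) ^ (-1/ζ) :=
  Real.rpow_pos_of_pos hx _


lemma dirA (ζ : ℝ) (hζ : 0 < ζ) (F : ℝ → ℝ)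
    (hmono : Monotone F) (hlt : ∀ x : ℝ, F x < 1) (hF0 : ∀ x : ℝ, 0 ≤ F x)
    (a b : ℕ → ℝ) (ha : ∀ n, 0 < a n)
    (hI : ∀ x : ℝ, 1 + ζ * x > 0 →
        Tendsto (fun n : ℕ => (F (a n * x + b n)) ^ n) atTop
          (𝓝 (Real.exp (-((1 + ζ * x) ^ (-1 / ζ)))))) :
    (∃ δ : ℝ → ℝ, (∀ᶠ η in atTop, 0 < δ η) ∧
      ∀ x : ℝ, 1 + ζ * x > 0 →
        Tendsto (fun η : ℝ => (1 - F (η + δ η * x)) / (1 - F η)) atTop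
          (𝓝 ((1 + ζ * x) ^ (-1 / ζ)))) := by
  set G : ℝ → ℝ := fun u => (1 + ζ * u) ^ (-1 / ζ) with hG
  set Fb : ℝ → ℝ := fun x => 1 - F x with hFbdef
  have hFbpos : ∀ x, 0 < Fb x := fun x => by simp [hFbdef]; linarith [hlt x]
  have hFbanti : ∀ {u v : ℝ}, u ≤ v → Fb v ≤ Fb u := fun h => by
    simp only [hFbdef]; linarith [hmono h]
  have hinv : Tendsto (fun n : ℕ => ((n : ℝ))⁻¹) atTop (𝓝 0) :=
    tendsto_inv_atTop_zero.comp tendsto_natCast_atTop_atTop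
  -- Step 1 : n * Fb(a n x + b n) → G x
  have hN : ∀ x : ℝ, 0 < 1 + ζ * x →
      Tendsto (fun n : ℕ => (n : ℝ) * Fb (a n * x + b n)) atTop (𝓝 (G x)) := by
    intro x hx
    have h := aux_mul_of_pow (Real.exp_pos _)
      (Eventually.of_forall fun n => ⟨hF0 _, hlt _⟩) (hI x hx)
    rw [Real.log_exp, neg_neg] at h
    exact h
  -- Step 2 : b → ∞
  have hN0 : Tendsto (fun n : ℕ => (n : ℝ) * Fb (b n)) atTop (𝓝 1) := by
    have := hN 0 (by norm_num)
    simp only [mul_zero, zero_add, add_zero] at this ⊢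
    rwa [show G 0 = 1 from by simp [hG]] at this
  have hFb0 : Tendsto (fun n : ℕ => Fb (b n)) atTop (𝓝 0) := by
    have h := hN0.mul hinv
    rw [mul_zero] at h
    refine h.congr' ?_
    filter_upwards [eventually_ge_atTop 1] with n hn
    have hn' : ((n : ℝ)) ≠ 0 := by positivity
    field_simp
  have hbtop : Tendsto b atTop atTop := by
    refine tendsto_atTop.2 fun c => ?_
    filter_upwards [hFb0.eventually (eventually_lt_nhds (hFbpos c))] with n hn
    by_contra h
    push_neg at h
    exact absurd (hFbanti h.le) (not_le.2 hn)
  -- Step 3 : (b (n+1) - b n) / a n → 0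
  have hshift : Tendsto (fun n : ℕ => (n : ℝ) * Fb (b (n + 1))) atTop (𝓝 1) := by
    have h1 : Tendsto (fun n : ℕ => ((n + 1 : ℕ) : ℝ) * Fb (b (n + 1))) atTop (𝓝 1) :=
      hN0.comp (tendsto_add_atTop_nat 1)
    have h2 : Tendsto (fun n : ℕ => Fb (b (n + 1))) atTop (𝓝 0) :=
      hFb0.comp (tendsto_add_atTop_nat 1)
    have h3 := h1.sub h2
    rw [sub_zero] at h3
    refine h3.congr fun n => ?_
    push_cast
    ring
  have hgap : Tendsto (fun n : ℕ => (b (n + 1) - b n) / a n) atTop (𝓝 0) := by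
    rw [Metric.tendsto_nhds]
    intro ε hε
    set ε0 : ℝ := min (ε / 2) (1 / (2 * ζ)) with hε0def
    have hε0 : 0 < ε0 := lt_min (by linarith) (by positivity)
    have hε0ζ : ζ * ε0 ≤ 1 / 2 := by
      have : ε0 ≤ 1 / (2 * ζ) := min_le_right _ _
      rw [le_div_iff₀ (by positivity)] at this
      nlinarith
    have hxm : 0 < 1 + ζ * (-ε0) := by nlinarith
    have hxp : 0 < 1 + ζ * ε0 := by nlinarith
    have hA : G ε0 < 1 := aux_Glt1 ζ hζ hε0
    have hB : 1 < G (-ε0) := aux_Ggt1 ζ hζ hε0 hxm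
    have hAn := hN ε0 hxp
    have hBn := hN (-ε0) hxm
    filter_upwards [hAn.eventually (eventually_lt_nhds (by linarith : G ε0 < (G ε0 + 1) / 2)),
      hshift.eventually (eventually_gt_nhds (by linarith : (G ε0 + 1) / 2 < 1)),
      hBn.eventually (eventually_gt_nhds (by linarith : (G (-ε0) + 1) / 2 < G (-ε0))),
      hshift.eventually (eventually_lt_nhds (by linarith : (1:ℝ) < (G (-ε0) + 1) / 2)),
      eventually_ge_atTop 1] with n h1 h2 h3 h4 hn1
    have hnpos : (0:ℝ) < (n : ℝ) := by positivity
    -- upper : b (n+1) < b n + a n * ε0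
    have hup : b (n + 1) < b n + a n * ε0 := by
      by_contra h
      push_neg at h
      have := hFbanti h
      have h5 : (n : ℝ) * Fb (b (n+1)) ≤ (n : ℝ) * Fb (a n * ε0 + b n) := by
        rw [show a n * ε0 + b n = b n + a n * ε0 by ring]
        exact mul_le_mul_of_nonneg_left this hnpos.le
      exact absurd h2 (not_lt.2 (le_of_lt (lt_of_le_of_lt h5 h1)))
    -- lower : b n - a n * ε0 < b (n+1)
    have hlo : b n + a n * (-ε0) < b (n + 1) := by
      by_contra h
      push_neg at h
      have := hFbanti h
      have h5 : (n : ℝ) * Fb (a n * (-ε0) + b n) ≤ (n : ℝ) * Fb (b (n+1)) := by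
        rw [show a n * (-ε0) + b n = b n + a n * (-ε0) by ring]
        exact mul_le_mul_of_nonneg_left this hnpos.le
      exact absurd (lt_of_lt_of_le h3 h5) (not_lt.2 h4.le)
    rw [Real.dist_eq, sub_zero, abs_lt]
    have han := ha n
    have hεhalf : ε0 ≤ ε / 2 := min_le_left _ _
    have hεε : ε0 < ε := lt_of_le_of_lt hεhalf (by linarith)
    have hmul : ε0 * a n < ε * a n := mul_lt_mul_of_pos_right hεε han
    have hre1 : a n * -ε0 = -(ε0 * a n) := by ring
    have hre2 : a n * ε0 = ε0 * a n := by ring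
    rw [hre1] at hlo
    rw [hre2] at hup
    constructor
    · rw [lt_div_iff₀ han]
      linarith
    · rw [div_lt_iff₀ han]
      linarith
  -- Step 4 : the index function N
  set N : ℝ → ℕ := fun η => sSup {n : ℕ | b n ≤ η} with hNdef
  have hbdd : ∀ η : ℝ, BddAbove {n : ℕ | b n ≤ η} := by
    intro η
    obtain ⟨M, hM⟩ := eventually_atTop.1 (hbtop.eventually (eventually_gt_atTop η))
    refine ⟨M, fun n hn => ?_⟩
    by_contra h
    push_neg at h
    exact absurd (hM n h.le) (not_lt.2 hn)
  have hNtop : Tendsto N atTop atTop := by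
    refine tendsto_atTop.2 fun k => ?_
    filter_upwards [eventually_ge_atTop (b k)] with η hη
    exact le_csSup (hbdd η) hη
  have hNmem : ∀ η : ℝ, b 0 ≤ η → b (N η) ≤ η := fun η h =>
    Nat.sSup_mem ⟨0, h⟩ (hbdd η)
  have hNsucc : ∀ η : ℝ, η < b (N η + 1) := by
    intro η
    by_contra h
    push_neg at h
    have h2 : N η + 1 ≤ N η := le_csSup (hbdd η) h
    omega
  -- Step 5 : s → 0
  set s : ℝ → ℝ := fun η => (η - b (N η)) / a (N η) with hsdef
  have hs0 : Tendsto s atTop (𝓝 0) := by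
    have hupper : Tendsto (fun η => (b (N η + 1) - b (N η)) / a (N η)) atTop (𝓝 0) :=
      hgap.comp hNtop
    refine tendsto_of_tendsto_of_tendsto_of_le_of_le' tendsto_const_nhds hupper ?_ ?_
    · filter_upwards [eventually_ge_atTop (b 0)] with η hη
      exact div_nonneg (by linarith [hNmem η hη]) (ha _).le
    · filter_upwards [] with η
      exact (div_le_div_iff_of_pos_right (ha _)).2 (by linarith [hNsucc η])
  -- Step 6 : uniform version of hN along N
  have hU : ∀ x : ℝ, 0 < 1 + ζ * x → ∀ y : ℝ → ℝ, Tendsto y atTop (𝓝 x) →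
      Tendsto (fun η : ℝ => (N η : ℝ) * Fb (b (N η) + a (N η) * y η)) atTop (𝓝 (G x)) := by
    intro x hx y hy
    rw [Metric.tendsto_nhds]
    intro ε' hε'
    obtain ⟨r, hr, hGr⟩ := Metric.continuousAt_iff.1 (aux_Gcont ζ hx) (ε' / 2) (by linarith)
    set ε : ℝ := min (r / 2) ((1 + ζ * x) / (2 * ζ)) with hεdef
    have hεpos : 0 < ε := lt_min (by linarith) (by positivity)
    have hεr : ε < r := lt_of_le_of_lt (min_le_left _ _) (by linarith)
    have hεζ : ζ * ε ≤ (1 + ζ * x) / 2 := by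
      have h1 : ε ≤ (1 + ζ * x) / (2 * ζ) := min_le_right _ _
      rw [le_div_iff₀ (by positivity)] at h1
      nlinarith
    have hxm : 0 < 1 + ζ * (x - ε) := by nlinarith
    have hxp : 0 < 1 + ζ * (x + ε) := by nlinarith
    have hGm : |G (x - ε) - G x| < ε' / 2 := by
      have := hGr (show dist (x - ε) x < r by
        rw [Real.dist_eq]; rw [abs_lt]; constructor <;> [linarith; linarith])
      rwa [Real.dist_eq] at this
    have hGp : |G (x + ε) - G x| < ε' / 2 := by
      have := hGr (show dist (x + ε) x < r by
        rw [Real.dist_eq]; rw [abs_lt]; constructor <;> [linarith; linarith])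
      rwa [Real.dist_eq] at this
    have hEl := (hN (x + ε) hxp).comp hNtop
    have hEr := (hN (x - ε) hxm).comp hNtop
    filter_upwards [(Metric.tendsto_nhds.1 hEl) (ε' / 2) (by linarith),
      (Metric.tendsto_nhds.1 hEr) (ε' / 2) (by linarith),
      (Metric.tendsto_nhds.1 hy) ε hεpos] with η hl hr' hyη
    simp only [Function.comp] at hl hr'
    rw [Real.dist_eq] at hl hr' hyη ⊢
    rw [abs_lt] at hl hr' hyη
    have hNnn : (0:ℝ) ≤ (N η : ℝ) := Nat.cast_nonneg _
    have hal : b (N η) + a (N η) * (x - ε) ≤ b (N η) + a (N η) * y η := by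
      have := (ha (N η)).le
      nlinarith [hyη.1]
    have har : b (N η) + a (N η) * y η ≤ b (N η) + a (N η) * (x + ε) := by
      have := (ha (N η)).le
      nlinarith [hyη.2]
    have hlow : (N η : ℝ) * Fb (b (N η) + a (N η) * (x + ε)) ≤
        (N η : ℝ) * Fb (b (N η) + a (N η) * y η) :=
      mul_le_mul_of_nonneg_left (hFbanti har) hNnn
    have hhigh : (N η : ℝ) * Fb (b (N η) + a (N η) * y η) ≤
        (N η : ℝ) * Fb (b (N η) + a (N η) * (x - ε)) :=
      mul_le_mul_of_nonneg_left (hFbanti hal) hNnn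
    rw [abs_lt] at hGm hGp ⊢
    have e1 : a (N η) * (x + ε) + b (N η) = b (N η) + a (N η) * (x + ε) := by ring
    have e2 : a (N η) * (x - ε) + b (N η) = b (N η) + a (N η) * (x - ε) := by ring
    rw [e1] at hl
    rw [e2] at hr'
    obtain ⟨hl1, hl2⟩ := hl
    obtain ⟨hr1, hr2⟩ := hr'
    obtain ⟨hm1, hm2⟩ := hGm
    obtain ⟨hp1, hp2⟩ := hGp
    simp only [hG, hFbdef] at hl1 hl2 hr1 hr2 hm1 hm2 hp1 hp2 hlow hhigh ⊢
    constructor <;> [linarith; linarith]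
  -- Step 7 : conclusion
  refine ⟨fun η => a (N η), Eventually.of_forall fun η => ha _, ?_⟩
  intro x hx
  have h1 := hU x hx (fun η => x + s η) (by
    have := (tendsto_const_nhds (x := x) (f := atTop (α := ℝ))).add hs0
    rwa [add_zero] at this)
  have h2 := hU 0 (by norm_num) s hs0
  rw [show G 0 = 1 from by simp [hG]] at h2
  have h3 := h1.div h2 one_ne_zero
  rw [div_one] at h3
  refine h3.congr' ?_
  filter_upwards [hNtop.eventually (eventually_ge_atTop 1), eventually_ge_atTop (b 0)]
    with η hN1 hb0
  have haN := ha (N η)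
  have hNne : ((N η : ℝ)) ≠ 0 := by positivity
  have key : b (N η) + a (N η) * s η = η := by
    simp only [hsdef]
    field_simp
    ring
  have key2 : b (N η) + a (N η) * (x + s η) = η + a (N η) * x := by
    rw [mul_add]
    rw [show b (N η) + (a (N η) * x + a (N η) * s η)
      = (b (N η) + a (N η) * s η) + a (N η) * x by ring, key]
  show (↑(N η) * Fb (b (N η) + a (N η) * (x + s η))) / (↑(N η) * Fb (b (N η) + a (N η) * s η))
      = (1 - F (η + a (N η) * x)) / (1 - F η)
  rw [key, key2, mul_div_mul_left _ _ hNne]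


lemma dirB (ζ : ℝ) (hζ : 0 < ζ) (F : ℝ → ℝ)
    (hmono : Monotone F)
    (hrc : ∀ x : ℝ, ContinuousWithinAt F (Set.Ici x) x)
    (hbot : Tendsto F atBot (𝓝 0))
    (htop : Tendsto F atTop (𝓝 1))
    (hlt : ∀ x : ℝ, F x < 1)
    (δ : ℝ → ℝ) (hδpos : ∀ᶠ η in atTop, 0 < δ η)
    (hii : ∀ x : ℝ, 1 + ζ * x > 0 →
        Tendsto (fun η : ℝ => (1 - F (η + δ η * x)) / (1 - F η)) atTop
          (𝓝 ((1 + ζ * x) ^ (-1 / ζ)))) :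
    (∃ (a b : ℕ → ℝ), (∀ n, 0 < a n) ∧
      ∀ x : ℝ, 1 + ζ * x > 0 →
        Tendsto (fun n : ℕ => (F (a n * x + b n)) ^ n) atTop
          (𝓝 (Real.exp (-((1 + ζ * x) ^ (-1 / ζ)))))) := by
  set G : ℝ → ℝ := fun u => (1 + ζ * u) ^ (-1 / ζ) with hG
  have hFbpos : ∀ x : ℝ, 0 < 1 - F x := fun x => by linarith [hlt x]
  -- quantile sequence
  set S : ℕ → Set ℝ := fun n => {x : ℝ | 1 - (n : ℝ)⁻¹ ≤ F x} with hS
  set b : ℕ → ℝ := fun n => sInf (S n) with hb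
  set a : ℕ → ℝ := fun n => if 0 < δ (b n) then δ (b n) else 1 with ha'
  have ha : ∀ n, 0 < a n := by
    intro n
    simp only [ha']
    split_ifs with h
    · exact h
    · norm_num
  have hSne : ∀ n : ℕ, 1 ≤ n → (S n).Nonempty := by
    intro n hn
    have h1 : (0:ℝ) < (n : ℝ)⁻¹ := by positivity
    obtain ⟨x, hx⟩ := (htop.eventually (eventually_gt_nhds (by linarith : 1 - (n:ℝ)⁻¹ < 1))).exists
    exact ⟨x, hx.le⟩
  have hSbdd : ∀ n : ℕ, 2 ≤ n → BddBelow (S n) := by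
    intro n hn
    have h1 : (n : ℝ)⁻¹ ≤ 2⁻¹ := by
      apply inv_anti₀ (by norm_num)
      exact_mod_cast hn
    obtain ⟨x₀, hx₀⟩ := eventually_atBot.1 (hbot.eventually
      (eventually_lt_nhds (by norm_num : (0:ℝ) < 1/2)))
    refine ⟨x₀, fun y hy => ?_⟩
    by_contra h
    push_neg at h
    have h2 : F y < 1/2 := hx₀ y h.le
    have h3 : (1:ℝ) - (n:ℝ)⁻¹ ≤ F y := hy
    norm_num at h1
    linarith
  have hSup : ∀ n : ℕ, 2 ≤ n → ∀ t : ℝ, b n < t → 1 - (n:ℝ)⁻¹ ≤ F t := by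
    intro n hn t ht
    obtain ⟨x, hx, hxt⟩ := (csInf_lt_iff (hSbdd n hn) (hSne n (by omega))).1 ht
    exact le_trans hx (hmono hxt.le)
  have hFb : ∀ n : ℕ, 2 ≤ n → 1 - (n:ℝ)⁻¹ ≤ F (b n) := by
    intro n hn
    have htd : Tendsto F (𝓝[>] (b n)) (𝓝 (F (b n))) :=
      (hrc (b n)).mono_left (nhdsWithin_mono _ Set.Ioi_subset_Ici_self)
    refine ge_of_tendsto htd ?_
    filter_upwards [self_mem_nhdsWithin] with t ht
    exact hSup n hn t ht
  have hlow : ∀ n : ℕ, 2 ≤ n → ∀ x' : ℝ, x' < b n → (n:ℝ)⁻¹ < 1 - F x' := by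
    intro n hn x' hx'
    have : x' ∉ S n := fun h => absurd (csInf_le (hSbdd n hn) h) (not_le.2 hx')
    have h2 : F x' < 1 - (n:ℝ)⁻¹ := by
      by_contra h
      push_neg at h
      exact this h
    linarith
  have hbtop : Tendsto b atTop atTop := by
    refine tendsto_atTop.2 fun c => ?_
    obtain ⟨m, hm⟩ := exists_nat_gt (1 / (1 - F c))
    have hm0 : (0:ℝ) < m := lt_trans (by have := hFbpos c; positivity) hm
    have hminv : (m:ℝ)⁻¹ < 1 - F c := by
      rw [inv_lt_comm₀ hm0 (hFbpos c)]
      rwa [one_div] at hm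
    filter_upwards [eventually_ge_atTop (max m 2)] with n hn
    have hn2 : 2 ≤ n := le_trans (le_max_right _ _) hn
    have hnm : m ≤ n := le_trans (le_max_left _ _) hn
    refine le_csInf (hSne n (by omega)) fun y hy => ?_
    by_contra h
    push_neg at h
    have h1 : F y ≤ F c := hmono h.le
    have h2 : 1 - (n:ℝ)⁻¹ ≤ F y := hy
    have h3 : (n:ℝ)⁻¹ ≤ (m:ℝ)⁻¹ := by
      apply inv_anti₀ hm0
      exact_mod_cast hnm
    linarith
  have hδb : ∀ᶠ n : ℕ in atTop, 0 < δ (b n) := hbtop.eventually hδpos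
  have haδ : ∀ᶠ n : ℕ in atTop, a n = δ (b n) := by
    filter_upwards [hδb] with n hn
    simp only [ha', if_pos hn]
  -- n * (1 - F (b n)) → 1
  have hnFb : Tendsto (fun n : ℕ => (n : ℝ) * (1 - F (b n))) atTop (𝓝 1) := by
    rw [Metric.tendsto_nhds]
    intro ε hε
    set ε' : ℝ := min (ε / 2) (1 / 2) with hε'def
    have hε'pos : 0 < ε' := lt_min (by linarith) (by norm_num)
    have hε'le : ε' ≤ ε / 2 := min_le_left _ _
    have hε'half : ε' ≤ 1 / 2 := min_le_right _ _
    obtain ⟨r, hr, hGr⟩ := Metric.continuousAt_iff.1 (aux_Gcont ζ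
      (show (0:ℝ) < 1 + ζ * 0 by norm_num)) (ε' / 2) (by linarith)
    set e : ℝ := min (r / 2) (1 / (2 * ζ)) with hedef
    have hepos : 0 < e := lt_min (by linarith) (by positivity)
    have heζ : ζ * e ≤ 1 / 2 := by
      have h1 : e ≤ 1 / (2 * ζ) := min_le_right _ _
      rw [le_div_iff₀ (by positivity)] at h1
      nlinarith
    have hxm : (0:ℝ) < 1 + ζ * (-e) := by nlinarith
    have hGe : G (-e) < 1 + ε' / 2 := by
      have := hGr (show dist (-e) 0 < r by
        rw [Real.dist_eq, sub_zero, abs_lt]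
        have : e ≤ r / 2 := min_le_left _ _
        constructor <;> linarith)
      rw [Real.dist_eq] at this
      have hG0 : (1 + ζ * (0:ℝ)) ^ (-1 / ζ) = 1 := by simp
      rw [hG0] at this
      rw [abs_lt] at this
      have : (1 + ζ * (-e)) ^ (-1/ζ) - 1 < ε' / 2 := this.2
      simp only [hG]
      linarith
    have hratio := (hii (-e) hxm).comp hbtop
    filter_upwards [hratio.eventually (eventually_lt_nhds
        (show G (-e) < 1 + ε' by linarith)),
      hδb, eventually_ge_atTop 2] with n hrat hδn hn2
    simp only [Function.comp] at hrat
    have hnpos : (0:ℝ) < (n:ℝ) := by positivity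
    have hden := hFbpos (b n)
    have hnum := hFbpos (b n + δ (b n) * (-e))
    -- upper bound : n * (1 - F (b n)) ≤ 1
    have hup : (n:ℝ) * (1 - F (b n)) ≤ 1 := by
      have h1 : 1 - F (b n) ≤ (n:ℝ)⁻¹ := by linarith [hFb n hn2]
      calc (n:ℝ) * (1 - F (b n)) ≤ (n:ℝ) * (n:ℝ)⁻¹ :=
            mul_le_mul_of_nonneg_left h1 hnpos.le
        _ = 1 := mul_inv_cancel₀ (ne_of_gt hnpos)
    -- lower bound
    have harg : b n + δ (b n) * (-e) < b n := by nlinarith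
    have hnuml : (n:ℝ)⁻¹ < 1 - F (b n + δ (b n) * (-e)) := hlow n hn2 _ harg
    have hratpos : (0:ℝ) < (1 - F (b n + δ (b n) * (-e))) / (1 - F (b n)) :=
      div_pos hnum hden
    have hlo : 1 / (1 + ε') ≤ (n:ℝ) * (1 - F (b n)) := by
      have h1 : (1 - F (b n + δ (b n) * (-e))) / (1 - F (b n)) < 1 + ε' := hrat
      have h2 : 1 - F (b n + δ (b n) * (-e)) < (1 + ε') * (1 - F (b n)) := by
        rw [div_lt_iff₀ hden] at h1
        linarith
      have h3 : (n:ℝ)⁻¹ < (1 + ε') * (1 - F (b n)) := lt_trans hnuml h2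
      rw [div_le_iff₀ (by linarith)]
      calc (1:ℝ) = (n:ℝ) * (n:ℝ)⁻¹ := (mul_inv_cancel₀ (ne_of_gt hnpos)).symm
        _ ≤ (n:ℝ) * ((1 + ε') * (1 - F (b n))) :=
            mul_le_mul_of_nonneg_left h3.le hnpos.le
        _ = (n:ℝ) * (1 - F (b n)) * (1 + ε') := by ring
    rw [Real.dist_eq, abs_lt]
    have hinv1 : 1 - ε' ≤ 1 / (1 + ε') := by
      rw [le_div_iff₀ (by linarith)]
      nlinarith
    constructor <;> [linarith; linarith]
  -- conclusion
  refine ⟨a, b, ha, fun x hx => ?_⟩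
  refine aux_pow_of_mul (Eventually.of_forall fun n => hlt _) ?_
  have hrx := (hii x hx).comp hbtop
  have hprod := hrx.mul hnFb
  rw [mul_one] at hprod
  refine hprod.congr' ?_
  filter_upwards [haδ, eventually_ge_atTop 1] with n hδn hn1
  simp only [Function.comp]
  have hden := hFbpos (b n)
  have harg : a n * x + b n = b n + δ (b n) * x := by rw [hδn]; ring
  rw [harg]
  field_simp


/-- Pickands–Balkema–de Haan theorem, case ζ > 0 (right endpoint τ = +∞). -/
theorem pickands_balkema_deHaan_pos
    (ζ : ℝ) (hζ : 0 < ζ) (F : ℝ → ℝ)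
    (hmono : Monotone F)
    (hrc : ∀ x : ℝ, ContinuousWithinAt F (Set.Ici x) x)
    (hbot : Tendsto F atBot (𝓝 0))
    (htop : Tendsto F atTop (𝓝 1))
    (hlt : ∀ x : ℝ, F x < 1) :
    (∃ (a b : ℕ → ℝ), (∀ n, 0 < a n) ∧
      ∀ x : ℝ, 1 + ζ * x > 0 →
        Tendsto (fun n : ℕ => (F (a n * x + b n)) ^ n) atTop
          (𝓝 (Real.exp (-((1 + ζ * x) ^ (-1 / ζ)))))) ↔
    (∃ δ : ℝ → ℝ, (∀ᶠ η in atTop, 0 < δ η) ∧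
      ∀ x : ℝ, 1 + ζ * x > 0 →
        Tendsto (fun η : ℝ => (1 - F (η + δ η * x)) / (1 - F η)) atTop
          (𝓝 ((1 + ζ * x) ^ (-1 / ζ)))) := by
  have hF0 : ∀ x : ℝ, 0 ≤ F x := by
    intro x
    refine le_of_tendsto hbot ?_
    filter_upwards [eventually_le_atBot x] with y hy
    exact hmono hy
  constructor
  · rintro ⟨a, b, ha, hI⟩
    exact dirA ζ hζ F hmono hlt hF0 a b ha hI
  · rintro ⟨δ, hδpos, hii⟩
    exact dirB ζ hζ F hmono hrc hbot htop hlt δ hδpos hii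
end

section
/- Let ζ < 0, let τ ∈ ℝ, and let F : ℝ → ℝ be a cumulative distribution function such that F(x) < 1 for every x < τ and F(x) = 1 for every x ≥ τ (so the right endpoint of the support of F is τ), and write F̄ = 1 − F for the survival function. Then the following are equivalent: (i) there exist a sequence (a_n) of positive real numbers and a sequence (b_n) of real numbers such that for every x ∈ ℝ with 1 + ζx > 0, (F(a_n · x + b_n))^n converges to exp(−(1+ζx)^{−1/ζ}) as n → ∞; (ii) there exists a function δ : ℝ → ℝ with δ(η) > 0 for all η < τ sufficiently close to τ, such that for every x ∈ ℝ with 1 + ζx > 0, F̄(η + δ(η)·x) / F̄(η) converges to (1+ζx)^{−1/ζ} as η → τ from the left (along the filter of neighborhoods of τ within (−∞, τ)). -/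
open Filter Topology


private lemma slope_log_one_sub :
    Tendsto (fun u : ℝ => Real.log (1 - u) / u) (𝓝[≠] (0:ℝ)) (𝓝 (-1)) := by
  have h1 : HasDerivAt (fun u : ℝ => 1 - u) (-1) 0 := by
    simpa using (hasDerivAt_id (0:ℝ)).const_sub 1
  have h2 : HasDerivAt (fun u : ℝ => Real.log (1 - u)) (-1) 0 := by
    have := (Real.hasDerivAt_log (by norm_num : (1:ℝ) - 0 ≠ 0)).comp 0 h1
    exact this.congr_deriv (by norm_num)
  have h3 := hasDerivAt_iff_tendsto_slope.1 h2
  refine h3.congr' ?_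
  filter_upwards [self_mem_nhdsWithin] with u hu
  simp [slope_def_field]

private lemma inv_nat_tendsto : Tendsto (fun n : ℕ => ((n:ℝ))⁻¹) atTop (𝓝 0) :=
  (tendsto_natCast_atTop_atTop (R := ℝ)).inv_tendsto_atTop

/-- If `n * g n → L > 0` then `(1 - g n)^n → exp (-L)`. -/
private lemma pow_lim_of_mul_lim (g : ℕ → ℝ) {L : ℝ} (hL : 0 < L)
    (h : Tendsto (fun n : ℕ => (n:ℝ) * g n) atTop (𝓝 L)) :
    Tendsto (fun n : ℕ => (1 - g n) ^ n) atTop (𝓝 (Real.exp (-L))) := by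
  have hg0 : ∀ᶠ n : ℕ in atTop, 0 < g n := by
    filter_upwards [h.eventually_const_lt (by linarith : (0:ℝ) < L),
      eventually_ge_atTop 1] with n h1 h2
    have hn0 : (0:ℝ) < n := by exact_mod_cast h2
    by_contra hng
    push_neg at hng
    have : (n:ℝ) * g n ≤ 0 := mul_nonpos_of_nonneg_of_nonpos hn0.le hng
    linarith
  have hgz : Tendsto g atTop (𝓝 0) := by
    have h2 := h.mul inv_nat_tendsto
    rw [mul_zero] at h2
    refine h2.congr' ?_
    filter_upwards [eventually_ge_atTop 1] with n hn
    have : (n:ℝ) ≠ 0 := by positivity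
    field_simp
  have hgne : Tendsto g atTop (𝓝[≠] (0:ℝ)) := by
    rw [tendsto_nhdsWithin_iff]
    exact ⟨hgz, hg0.mono fun n hn => ne_of_gt hn⟩
  have hs := slope_log_one_sub.comp hgne
  have hlog : Tendsto (fun n : ℕ => (n:ℝ) * Real.log (1 - g n)) atTop (𝓝 (-L)) := by
    have h2 := h.mul hs
    rw [show L * (-1) = -L by ring] at h2
    refine h2.congr' ?_
    filter_upwards [hg0] with n hn
    have : g n ≠ 0 := ne_of_gt hn
    simp only [Function.comp_apply]
    field_simp
  have hexp := (Real.continuous_exp.tendsto _).comp hlog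
  refine hexp.congr' ?_
  filter_upwards [hgz.eventually_lt_const (by norm_num : (0:ℝ) < 1)] with n hn
  have h1 : 0 < 1 - g n := by linarith
  simp only [Function.comp]
  rw [Real.exp_nat_mul, Real.exp_log h1]

/-- Converse: if `(1 - g n)^n → exp (-L)` with `L > 0` and `0 ≤ g n ≤ 1`, then `n * g n → L`. -/
private lemma mul_lim_of_pow_lim (g : ℕ → ℝ) {L : ℝ} (hL : 0 < L)
    (hg0 : ∀ n, 0 ≤ g n) (hg1 : ∀ n, g n ≤ 1)
    (h : Tendsto (fun n : ℕ => (1 - g n) ^ n) atTop (𝓝 (Real.exp (-L)))) :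
    Tendsto (fun n : ℕ => (n:ℝ) * g n) atTop (𝓝 L) := by
  have hepos : 0 < Real.exp (-L) := Real.exp_pos _
  have hFpos : ∀ᶠ n : ℕ in atTop, 0 < 1 - g n := by
    filter_upwards [h.eventually_const_lt (by linarith : Real.exp (-L)/2 < Real.exp (-L)), eventually_ge_atTop 1] with n h1 h2
    rcases lt_or_eq_of_le (hg1 n) with hlt | heq2
    · linarith
    · exfalso
      have : 1 - g n = 0 := by linarith
      rw [this, zero_pow (by omega : n ≠ 0)] at h1
      linarith
  have hlog : Tendsto (fun n : ℕ => (n:ℝ) * Real.log (1 - g n)) atTop (𝓝 (-L)) := by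
    have h2 := (Real.continuousAt_log (ne_of_gt hepos)).tendsto.comp h
    rw [Real.log_exp] at h2
    refine h2.congr ?_
    intro n
    simp [Function.comp, Real.log_pow]
  have hlogz : Tendsto (fun n : ℕ => Real.log (1 - g n)) atTop (𝓝 0) := by
    have h2 := hlog.mul inv_nat_tendsto
    rw [mul_zero] at h2
    refine h2.congr' ?_
    filter_upwards [eventually_ge_atTop 1] with n hn
    have : (n:ℝ) ≠ 0 := by positivity
    field_simp
  have hgz : Tendsto g atTop (𝓝 0) := by
    have h2 := ((Real.continuous_exp.tendsto _).comp hlogz)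
    rw [Real.exp_zero] at h2
    have h3 := (tendsto_const_nhds (x := (1:ℝ)) (f := atTop (α := ℕ))).sub h2
    rw [sub_self] at h3
    refine h3.congr' ?_
    filter_upwards [hFpos] with n hn
    simp [Function.comp, Real.exp_log hn]
  have hgpos : ∀ᶠ n : ℕ in atTop, 0 < g n := by
    filter_upwards [hlog.eventually_lt_const (by linarith : -L < -L/2),
      eventually_ge_atTop 1, hFpos] with n h1 h2 h3
    have hn0 : (0:ℝ) < n := by exact_mod_cast h2
    have hlogneg : Real.log (1 - g n) < 0 := by
      by_contra hc
      push_neg at hc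
      have : 0 ≤ (n:ℝ) * Real.log (1 - g n) := mul_nonneg hn0.le hc
      linarith
    have := (Real.log_neg_iff h3).1 hlogneg
    linarith
  have hgne : Tendsto g atTop (𝓝[≠] (0:ℝ)) := by
    rw [tendsto_nhdsWithin_iff]
    exact ⟨hgz, hgpos.mono fun n hn => ne_of_gt hn⟩
  have hs := slope_log_one_sub.comp hgne
  have hsinv := hs.inv₀ (by norm_num : (-1:ℝ) ≠ 0)
  have h2 := hlog.mul hsinv
  rw [show -L * (-1:ℝ)⁻¹ = L by ring] at h2
  refine h2.congr' ?_
  filter_upwards [hgpos, hFpos] with n hn hFn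
  have hg : g n ≠ 0 := ne_of_gt hn
  have hlogne : Real.log (1 - g n) ≠ 0 := by
    have : 1 - g n < 1 := by linarith
    exact ne_of_lt ((Real.log_neg_iff hFn).2 this)
  simp only [Function.comp]
  field_simp


private lemma dir_ii_to_i
    (ζ : ℝ) (hζ : ζ < 0) (τ : ℝ) (F : ℝ → ℝ)
    (hmono : Monotone F)
    (hrc : ∀ x : ℝ, ContinuousWithinAt F (Set.Ici x) x)
    (hbot : Tendsto F atBot (𝓝 0))
    (hlt : ∀ x : ℝ, x < τ → F x < 1)
    (heq : ∀ x : ℝ, τ ≤ x → F x = 1)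
    (δ : ℝ → ℝ) (hδpos : ∀ᶠ η in 𝓝[<] τ, 0 < δ η)
    (hδ : ∀ x : ℝ, 1 + ζ * x > 0 →
      Tendsto (fun η : ℝ => (1 - F (η + δ η * x)) / (1 - F η)) (𝓝[<] τ)
        (𝓝 ((1 + ζ * x) ^ (-1 / ζ)))) :
    ∃ a b : ℕ → ℝ, (∀ n, 0 < a n) ∧ ∀ x : ℝ, 1 + ζ * x > 0 →
      Tendsto (fun n : ℕ => (F (a n * x + b n)) ^ n) atTop
        (𝓝 (Real.exp (-((1 + ζ * x) ^ (-1 / ζ))))) := by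
  have hζ0 : ζ ≠ 0 := ne_of_lt hζ
  have he : 0 < -1 / ζ := div_pos_of_neg_of_neg (by norm_num) hζ
  have hF1 : ∀ y, F y ≤ 1 := by
    intro y
    rcases le_or_gt τ y with h | h
    · exact le_of_eq (heq y h)
    · exact (hlt y h).le
  have hGpos : ∀ y, y < τ → 0 < 1 - F y := fun y hy => by linarith [hlt y hy]
  -- Step A : `F → 1` at `τ⁻`
  have hml := hmono.tendsto_nhdsLT τ
  set s₀ := sSup (F '' Set.Iio τ) with hs₀
  have hbddA : BddAbove (F '' Set.Iio τ) := ⟨1, fun v ⟨y, _, hy⟩ => hy ▸ hF1 y⟩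
  have hneA : (F '' Set.Iio τ).Nonempty := ⟨F (τ - 1), ⟨τ - 1, by norm_num, rfl⟩⟩
  have hles : ∀ y, y < τ → F y ≤ s₀ := fun y hy => le_csSup hbddA ⟨y, hy, rfl⟩
  have hs1 : s₀ = 1 := by
    by_contra hne
    have hslt : s₀ < 1 := lt_of_le_of_ne (csSup_le hneA fun v ⟨y, _, hy⟩ => hy ▸ hF1 y) hne
    set c := 1 - s₀ with hc
    have hcpos : 0 < c := by linarith
    set x₀ := -1 / (2 * ζ) with hx₀def
    have hx₀ : 1 + ζ * x₀ > 0 := by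
      have : ζ * x₀ = -1/2 := by rw [hx₀def]; field_simp
      rw [this]; norm_num
    set ψ₀ := (1 + ζ * x₀) ^ (-1 / ζ) with hψ₀def
    have hψ₀pos : 0 < ψ₀ := Real.rpow_pos_of_pos hx₀ _
    have hψ₀lt : ψ₀ < 1 := by
      apply Real.rpow_lt_one (by linarith) _ he
      have : ζ * x₀ = -1/2 := by rw [hx₀def]; field_simp
      rw [this]; norm_num
    set s := (1 + ψ₀) / 2 with hs
    have hspos : 0 < s := by positivity
    have hslt1 : s < 1 := by rw [hs]; linarith
    have hGc : Tendsto (fun η => 1 - F η) (𝓝[<] τ) (𝓝 c) := by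
      rw [hc]; exact tendsto_const_nhds.sub hml
    have hev : ∀ᶠ η in 𝓝[<] τ,
        ((1 - F (η + δ η * x₀)) / (1 - F η) < s ∧ ψ₀ / 2 < (1 - F (η + δ η * x₀)) / (1 - F η))
        ∧ (1 - F η < c / s ∧ η < τ) := by
      refine (((hδ x₀ hx₀).eventually_lt_const (by rw [hs]; linarith)).and
        ((hδ x₀ hx₀).eventually_const_lt (by linarith))).and
        ((hGc.eventually_lt_const ?_).and self_mem_nhdsWithin)
      rw [lt_div_iff₀ hspos]; nlinarith
    obtain ⟨η, ⟨hr1, hr2⟩, hGη, hητ⟩ := hev.exists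
    have hGηpos := hGpos η hητ
    set p := η + δ η * x₀ with hp
    have hnum_pos : 0 < 1 - F p := by
      have := mul_pos (lt_trans (by positivity) hr2) hGηpos
      calc (0:ℝ) < (1 - F p) / (1 - F η) * (1 - F η) := this
        _ = 1 - F p := div_mul_cancel₀ _ (ne_of_gt hGηpos)
    have hpτ : p < τ := by
      by_contra hge
      push_neg at hge
      rw [heq p hge] at hnum_pos; linarith
    have h1 : 1 - F p ≥ c := by have := hles p hpτ; linarith
    have h2 : 1 - F p < s * (1 - F η) := by
      have := (div_lt_iff₀ hGηpos).1 hr1; linarith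
    have h3 : s * (1 - F η) < s * (c / s) := by
      exact mul_lt_mul_of_pos_left hGη hspos
    rw [mul_div_cancel₀ _ (ne_of_gt hspos)] at h3
    linarith
  rw [hs1] at hml
  have htauG : Tendsto (fun η => 1 - F η) (𝓝[<] τ) (𝓝 0) := by
    have h2 : Tendsto (fun η : ℝ => 1 - F η) (𝓝[<] τ) (𝓝 (1 - 1)) :=
      tendsto_const_nhds.sub hml
    simpa using h2
  -- Step B : the sequence `b`
  set S : ℕ → Set ℝ := fun n => {y | 1 - F y ≤ ((n:ℝ))⁻¹} with hSdef
  have hSup : ∀ n : ℕ, ∀ {y z : ℝ}, y ∈ S n → y ≤ z → z ∈ S n := by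
    intro n y z hy hyz
    have := hmono hyz
    simp only [hSdef, Set.mem_setOf_eq] at hy ⊢
    linarith
  have hSne : ∀ n, (S n).Nonempty := by
    intro n
    refine ⟨τ, ?_⟩
    have hFτ : F τ = 1 := heq τ le_rfl
    simp only [hSdef, Set.mem_setOf_eq, hFτ, sub_self]
    exact inv_nonneg.mpr (Nat.cast_nonneg n)
  have hSbdd : ∀ n : ℕ, 2 ≤ n → BddBelow (S n) := by
    intro n hn
    have hn2 : (2:ℝ) ≤ (n:ℝ) := by exact_mod_cast hn
    have hn1 : ((n:ℝ))⁻¹ < 1 := by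
      rw [inv_lt_one_iff₀]; right; linarith
    obtain ⟨x₀, hx₀⟩ := eventually_atBot.1
      (hbot.eventually_lt_const (show (0:ℝ) < 1 - (n:ℝ)⁻¹ by linarith))
    refine ⟨x₀, fun s hs => ?_⟩
    by_contra hcs
    push_neg at hcs
    have h2 := hx₀ s hcs.le
    simp only [hSdef, Set.mem_setOf_eq] at hs
    linarith
  set b : ℕ → ℝ := fun n => sInf (S n) with hbdef
  have hP1 : ∀ n : ℕ, 2 ≤ n → 1 - F (b n) ≤ ((n:ℝ))⁻¹ := by
    intro n hn
    have key : ∀ z, b n < z → 1 - (n:ℝ)⁻¹ ≤ F z := by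
      intro z hz
      obtain ⟨s, hsS, hsz⟩ := exists_lt_of_csInf_lt (hSne n) hz
      have h2 := hSup n hsS hsz.le
      simp only [hSdef, Set.mem_setOf_eq] at h2
      linarith
    have ht : Tendsto F (𝓝[>] (b n)) (𝓝 (F (b n))) :=
      (hrc (b n)).mono_left (nhdsWithin_mono _ Set.Ioi_subset_Ici_self)
    have h3 : 1 - (n:ℝ)⁻¹ ≤ F (b n) := by
      refine ge_of_tendsto ht ?_
      filter_upwards [self_mem_nhdsWithin] with z hz
      exact key z hz
    linarith
  have hP2 : ∀ n : ℕ, 2 ≤ n → ∀ y, y < b n → ((n:ℝ))⁻¹ < 1 - F y := by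
    intro n hn y hy
    by_contra hc
    push_neg at hc
    have hyS : y ∈ S n := hc
    exact absurd (csInf_le (hSbdd n hn) hyS) (not_le.2 hy)
  have hP3 : ∀ n : ℕ, 2 ≤ n → b n < τ := by
    intro n hn
    have hn2 : (2:ℝ) ≤ (n:ℝ) := by exact_mod_cast hn
    have hpos : (0:ℝ) < (n:ℝ)⁻¹ := by positivity
    obtain ⟨η, hη1, hη2⟩ := ((htauG.eventually_lt_const hpos).and self_mem_nhdsWithin).exists
    exact lt_of_le_of_lt (csInf_le (hSbdd n hn) hη1.le) hη2
  have hb_tend : Tendsto b atTop (𝓝[<] τ) := by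
    rw [tendsto_nhdsWithin_iff]
    constructor
    · rw [tendsto_order]
      constructor
      · intro cc hcc
        set c' := (cc + τ) / 2 with hc'
        have hc'1 : cc < c' := by rw [hc']; linarith
        have hc'2 : c' < τ := by rw [hc']; linarith
        have hGc' : 0 < 1 - F c' := hGpos c' hc'2
        have hev : ∀ᶠ n : ℕ in atTop, ((n:ℝ))⁻¹ < 1 - F c' :=
          inv_nat_tendsto.eventually_lt_const hGc'
        filter_upwards [hev, eventually_ge_atTop 2] with n h1 h2
        have hlow : ∀ s ∈ S n, c' ≤ s := by
          intro s hs
          by_contra hc2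
          push_neg at hc2
          have h3 := hmono hc2.le
          simp only [hSdef, Set.mem_setOf_eq] at hs
          linarith
        have : c' ≤ b n := le_csInf (hSne n) hlow
        linarith
      · intro cc hcc
        filter_upwards [eventually_ge_atTop 2] with n hn
        exact lt_trans (hP3 n hn) hcc
    · filter_upwards [eventually_ge_atTop 2] with n hn
      exact hP3 n hn
  -- Step C : the sequence `a`
  set a : ℕ → ℝ := fun n => if 0 < δ (b n) then δ (b n) else 1 with hadef
  have hapos : ∀ n, 0 < a n := by
    intro n
    rw [hadef]
    dsimp only
    split_ifs with h
    exacts [h, one_pos]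
  have ha_ev : ∀ᶠ n : ℕ in atTop, a n = δ (b n) := by
    filter_upwards [hb_tend.eventually hδpos] with n hn
    rw [hadef]
    dsimp only
    rw [if_pos hn]
  -- Step D : `n * (1 - F (b n)) → 1`
  have hnG1 : Tendsto (fun n : ℕ => (n:ℝ) * (1 - F (b n))) atTop (𝓝 1) := by
    rw [tendsto_order]
    constructor
    · intro cc hcc
      rcases le_or_gt cc 0 with hc0 | hc0
      · filter_upwards [eventually_ge_atTop 2] with n hn
        have hn2 : (2:ℝ) ≤ (n:ℝ) := by exact_mod_cast hn
        have hn0 : (0:ℝ) < (n:ℝ) := by linarith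
        exact lt_of_le_of_lt hc0 (mul_pos hn0 (hGpos (b n) (hP3 n hn)))
      · have hcont : ContinuousAt (fun u : ℝ => (1 + ζ * u) ^ (-1/ζ)) 0 := by
          have hlin : ContinuousAt (fun u : ℝ => 1 + ζ * u) 0 :=
            (continuousAt_const.mul continuousAt_id).const_add 1
          exact hlin.rpow_const (Or.inl (by norm_num))
        have h10 : (fun u : ℝ => (1 + ζ * u) ^ (-1/ζ)) 0 < 1/cc := by
          have h2 : (1:ℝ) + ζ * 0 = 1 := by ring
          simp only [h2, Real.one_rpow]
          rw [lt_div_iff₀ hc0]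
          linarith
        have hev0 : ∀ᶠ u in 𝓝[<] (0:ℝ), (1 + ζ * u) ^ (-1/ζ) < 1/cc ∧ u < 0 := by
          refine Filter.Eventually.and ?_ ?_
          · exact (hcont.tendsto.eventually_lt_const h10).filter_mono nhdsWithin_le_nhds
          · exact eventually_mem_nhdsWithin.mono fun u hu => hu
        obtain ⟨u, hu1, hu2⟩ := hev0.exists
        have hζu : 0 < ζ * u := mul_pos_of_neg_of_neg hζ hu2
        have hxu : 1 + ζ * u > 0 := by linarith
        have hr := (hδ u hxu).comp hb_tend
        filter_upwards [hr.eventually_lt_const hu1, eventually_ge_atTop 2,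
          hb_tend.eventually hδpos] with n h1 h2 h3
        have hGb := hGpos (b n) (hP3 n h2)
        have hδu : δ (b n) * u < 0 := mul_neg_of_pos_of_neg h3 hu2
        have hyb : b n + δ (b n) * u < b n := by linarith
        have h4 := hP2 n h2 _ hyb
        have hn2 : (2:ℝ) ≤ (n:ℝ) := by exact_mod_cast h2
        have hn0 : (0:ℝ) < (n:ℝ) := by linarith
        simp only [Function.comp] at h1
        rw [div_lt_div_iff₀ hGb hc0] at h1
        have h5 : cc * (n:ℝ)⁻¹ < 1 - F (b n) := by nlinarith
        have h6 := mul_lt_mul_of_pos_left h5 hn0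
        rw [show (n:ℝ) * (cc * (n:ℝ)⁻¹) = cc * ((n:ℝ) * (n:ℝ)⁻¹) by ring,
          mul_inv_cancel₀ (ne_of_gt hn0), mul_one] at h6
        exact h6
    · intro cc hcc
      filter_upwards [eventually_ge_atTop 2] with n hn
      have h1 := hP1 n hn
      have hn2 : (2:ℝ) ≤ (n:ℝ) := by exact_mod_cast hn
      have hn0 : (0:ℝ) < (n:ℝ) := by linarith
      have h2 : (n:ℝ) * (1 - F (b n)) ≤ (n:ℝ) * (n:ℝ)⁻¹ :=
        mul_le_mul_of_nonneg_left h1 hn0.le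
      rw [mul_inv_cancel₀ (ne_of_gt hn0)] at h2
      linarith
  -- Step E : conclusion
  refine ⟨a, b, hapos, ?_⟩
  intro x hx
  have hψxpos : 0 < (1 + ζ * x) ^ (-1/ζ) := Real.rpow_pos_of_pos hx _
  have hrx := (hδ x hx).comp hb_tend
  have hnum : Tendsto (fun n : ℕ => (n:ℝ) * (1 - F (b n + δ (b n) * x))) atTop
      (𝓝 ((1 + ζ * x) ^ (-1/ζ))) := by
    have h2 := hnG1.mul hrx
    rw [one_mul] at h2
    refine h2.congr' ?_
    filter_upwards [eventually_ge_atTop 2] with n hn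
    have hGb := ne_of_gt (hGpos (b n) (hP3 n hn))
    simp only [Function.comp]
    field_simp
  have hpow := pow_lim_of_mul_lim _ hψxpos hnum
  refine hpow.congr' ?_
  filter_upwards [ha_ev] with n hn
  rw [sub_sub_cancel, hn, add_comm (b n) (δ (b n) * x)]

private lemma dir_i_to_ii
    (ζ : ℝ) (hζ : ζ < 0) (τ : ℝ) (F : ℝ → ℝ)
    (hmono : Monotone F)
    (hbot : Tendsto F atBot (𝓝 0))
    (hlt : ∀ x : ℝ, x < τ → F x < 1)
    (heq : ∀ x : ℝ, τ ≤ x → F x = 1)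
    (a b : ℕ → ℝ) (hapos : ∀ n, 0 < a n)
    (hab : ∀ x : ℝ, 1 + ζ * x > 0 →
      Tendsto (fun n : ℕ => (F (a n * x + b n)) ^ n) atTop
        (𝓝 (Real.exp (-((1 + ζ * x) ^ (-1 / ζ)))))) :
    ∃ δ : ℝ → ℝ, (∀ᶠ η in 𝓝[<] τ, 0 < δ η) ∧
      ∀ x : ℝ, 1 + ζ * x > 0 →
        Tendsto (fun η : ℝ => (1 - F (η + δ η * x)) / (1 - F η)) (𝓝[<] τ)
          (𝓝 ((1 + ζ * x) ^ (-1 / ζ))) := by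
  have hζ0 : ζ ≠ 0 := ne_of_lt hζ
  have he : 0 < -1 / ζ := div_pos_of_neg_of_neg (by norm_num) hζ
  have hF1 : ∀ y, F y ≤ 1 := by
    intro y
    rcases le_or_gt τ y with h | h
    · exact le_of_eq (heq y h)
    · exact (hlt y h).le
  have hF0 : ∀ y, 0 ≤ F y := fun y =>
    le_of_tendsto hbot (eventually_atBot.2 ⟨y, fun z hz => hmono hz⟩)
  have hGpos : ∀ y, y < τ → 0 < 1 - F y := fun y hy => by linarith [hlt y hy]
  -- Step A' : `n * (1 - F (aₙ x + bₙ)) → (1+ζx)^(-1/ζ)`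
  have hA : ∀ x : ℝ, 1 + ζ * x > 0 →
      Tendsto (fun n : ℕ => (n:ℝ) * (1 - F (a n * x + b n))) atTop
        (𝓝 ((1 + ζ * x) ^ (-1/ζ))) := by
    intro x hx
    have hψpos : 0 < (1 + ζ * x) ^ (-1/ζ) := Real.rpow_pos_of_pos hx _
    refine mul_lim_of_pow_lim _ hψpos (fun n => by linarith [hF1 (a n * x + b n)])
      (fun n => by linarith [hF0 (a n * x + b n)]) ?_
    refine (hab x hx).congr fun n => ?_
    rw [sub_sub_cancel]
  -- `n * (1 - F (bₙ)) → 1`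
  have hA0 : Tendsto (fun n : ℕ => (n:ℝ) * (1 - F (b n))) atTop (𝓝 1) := by
    have h2 := hA 0 (by norm_num)
    simp only [mul_zero, zero_add, Real.one_rpow, add_zero] at h2
    exact h2
  have hGb0 : Tendsto (fun n : ℕ => 1 - F (b n)) atTop (𝓝 0) := by
    have h2 := hA0.mul inv_nat_tendsto
    rw [mul_zero] at h2
    refine h2.congr' ?_
    filter_upwards [eventually_ge_atTop 1] with n hn
    have : (n:ℝ) ≠ 0 := by positivity
    field_simp
  have hbτ : ∀ᶠ n : ℕ in atTop, b n < τ := by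
    filter_upwards [hA0.eventually_const_lt (by norm_num : (0:ℝ) < 1)] with n hn
    by_contra hc
    push_neg at hc
    rw [heq (b n) hc, sub_self, mul_zero] at hn
    exact absurd hn (lt_irrefl 0)
  have hb_tend : Tendsto b atTop (𝓝[<] τ) := by
    rw [tendsto_nhdsWithin_iff]
    refine ⟨?_, hbτ⟩
    rw [tendsto_order]
    constructor
    · intro c hc
      set c' := (c + τ) / 2 with hc'
      have hc'1 : c < c' := by rw [hc']; linarith
      have hc'2 : c' < τ := by rw [hc']; linarith
      have hGc' : 0 < 1 - F c' := hGpos c' hc'2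
      filter_upwards [hGb0.eventually_lt_const hGc'] with n hn
      by_contra hcon
      push_neg at hcon
      rcases le_or_gt (b n) c' with h2 | h2
      · have := hmono h2
        linarith
      · linarith
    · intro c hc
      filter_upwards [hbτ] with n hn
      exact lt_trans hn hc
  have htauG : Tendsto (fun η : ℝ => 1 - F η) (𝓝[<] τ) (𝓝 0) := by
    rw [tendsto_order]
    constructor
    · intro c hc
      exact Eventually.of_forall fun η => lt_of_lt_of_le hc (by linarith [hF1 η])
    · intro c hc
      obtain ⟨n, hn1, hn2⟩ := ((hGb0.eventually_lt_const hc).and hbτ).exists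
      have hIoo : Set.Ioo (b n) τ ∈ 𝓝[<] τ := Ioo_mem_nhdsLT_of_mem ⟨hn2, le_rfl⟩
      filter_upwards [hIoo] with η hη
      have := hmono hη.1.le
      linarith
  -- the `N` function and the candidate `δ`
  set N : ℝ → ℕ := fun η => ⌊(1 - F η)⁻¹⌋₊ with hNdef
  have hNtend : Tendsto N (𝓝[<] τ) atTop := by
    refine tendsto_nat_floor_atTop.comp ?_
    refine Filter.Tendsto.inv_tendsto_nhdsGT_zero ?_
    rw [tendsto_nhdsWithin_iff]
    exact ⟨htauG, eventually_mem_nhdsWithin.mono fun η hη => hGpos η hη⟩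
  have hNfacts : ∀ η, η < τ → (1:ℝ) ≤ (N η : ℝ) ∧ 1 - F η ≤ ((N η : ℝ))⁻¹ ∧
      ((N η : ℝ) + 1)⁻¹ < 1 - F η := by
    intro η hη
    have hG := hGpos η hη
    have hG1 : 1 - F η ≤ 1 := by linarith [hF0 η]
    have hinv1 : (1:ℝ) ≤ (1 - F η)⁻¹ := by
      rw [le_inv_comm₀ one_pos hG]
      simpa using hG1
    have hN1 : (1:ℝ) ≤ (N η : ℝ) := by
      have := Nat.le_floor (α := ℝ) (n := 1) (by exact_mod_cast hinv1)
      exact_mod_cast this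
    have hNpos : (0:ℝ) < (N η : ℝ) := by linarith
    refine ⟨hN1, ?_, ?_⟩
    · have hfl : ((N η : ℝ)) ≤ (1 - F η)⁻¹ := Nat.floor_le (by positivity)
      have h2 := inv_anti₀ hNpos hfl
      rwa [inv_inv] at h2
    · have hfl : (1 - F η)⁻¹ < (N η : ℝ) + 1 := by
        have := Nat.lt_floor_add_one ((1 - F η)⁻¹)
        exact_mod_cast this
      have h2 := inv_strictAnti₀ (by positivity) hfl
      rwa [inv_inv] at h2
  -- E1 : lower position bound
  have hE1 : ∀ u : ℝ, u < 0 → ∀ᶠ η in 𝓝[<] τ, a (N η) * u + b (N η) < η := by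
    intro u hu
    have hζu : 0 < ζ * u := mul_pos_of_neg_of_neg hζ hu
    have hxu : 1 + ζ * u > 0 := by linarith
    have hψu : 1 < (1 + ζ * u) ^ (-1/ζ) :=
      (Real.one_lt_rpow_iff_of_pos (by linarith)).mpr (Or.inl ⟨by linarith, he⟩)
    have hev : ∀ᶠ n : ℕ in atTop, 1 < (n:ℝ) * (1 - F (a n * u + b n)) :=
      (hA u hxu).eventually_const_lt hψu
    filter_upwards [hNtend.eventually hev, eventually_mem_nhdsWithin] with η h1 h2
    obtain ⟨hN1, hup, _⟩ := hNfacts η h2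
    have hNpos : (0:ℝ) < (N η : ℝ) := by linarith
    have h3 : ((N η : ℝ))⁻¹ < 1 - F (a (N η) * u + b (N η)) := by
      by_contra hcon
      push_neg at hcon
      have h4 := mul_le_mul_of_nonneg_left hcon hNpos.le
      rw [mul_inv_cancel₀ (ne_of_gt hNpos)] at h4
      exact absurd h1 (not_lt.2 h4)
    have h4 : F (a (N η) * u + b (N η)) < F η := by linarith
    by_contra hcon
    push_neg at hcon
    exact absurd (hmono hcon) (not_le.2 h4)
  -- E2 : upper position bound
  have hE2 : ∀ v : ℝ, 0 < v → 1 + ζ * v > 0 →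
      ∀ᶠ η in 𝓝[<] τ, η < a (N η) * v + b (N η) := by
    intro v hv hxv
    have hψvpos : 0 < (1 + ζ * v) ^ (-1/ζ) := Real.rpow_pos_of_pos hxv _
    have hψv1 : (1 + ζ * v) ^ (-1/ζ) < 1 := by
      refine Real.rpow_lt_one (by linarith) ?_ he
      nlinarith
    set ψ' := (1 + (1 + ζ * v) ^ (-1/ζ)) / 2 with hψ'def
    have hψ'1 : ψ' < 1 := by rw [hψ'def]; linarith
    have hψ'pos : 0 < ψ' := by rw [hψ'def]; linarith
    have hev : ∀ᶠ n : ℕ in atTop, (n:ℝ) * (1 - F (a n * v + b n)) < ψ' :=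
      (hA v hxv).eventually_lt_const (by rw [hψ'def]; linarith)
    have hev2 : ∀ᶠ n : ℕ in atTop, ψ' * ((n:ℝ) + 1) ≤ (n:ℝ) := by
      filter_upwards [(tendsto_natCast_atTop_atTop (R := ℝ)).eventually_ge_atTop
        (ψ' / (1 - ψ'))] with n hn
      rw [div_le_iff₀ (by linarith)] at hn
      nlinarith
    filter_upwards [hNtend.eventually (hev.and hev2), eventually_mem_nhdsWithin]
      with η hh h2
    obtain ⟨h1, h1b⟩ := hh
    obtain ⟨hN1, _, hlow⟩ := hNfacts η h2
    have hNpos : (0:ℝ) < (N η : ℝ) := by linarith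
    have hN1pos : (0:ℝ) < (N η : ℝ) + 1 := by linarith
    have hX : 1 - F (a (N η) * v + b (N η)) < ((N η : ℝ) + 1)⁻¹ := by
      by_contra hcon
      push_neg at hcon
      have h5 := mul_le_mul_of_nonneg_left hcon hNpos.le
      have h6 : ψ' ≤ (N η : ℝ) * ((N η : ℝ) + 1)⁻¹ := by
        rw [show (N η : ℝ) * ((N η : ℝ) + 1)⁻¹ = (N η : ℝ) / ((N η : ℝ) + 1) from
          (div_eq_mul_inv _ _).symm, le_div_iff₀ hN1pos]
        exact h1b
      linarith
    have h4 : F η < F (a (N η) * v + b (N η)) := by linarith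
    by_contra hcon2
    push_neg at hcon2
    exact absurd (hmono hcon2) (not_le.2 h4)
  -- conclusion
  refine ⟨fun η => a (N η), Eventually.of_forall fun η => hapos _, ?_⟩
  intro x hx
  show Tendsto (fun η : ℝ => (1 - F (η + a (N η) * x)) / (1 - F η)) (𝓝[<] τ)
    (𝓝 ((1 + ζ * x) ^ (-1 / ζ)))
  set φ := fun y : ℝ => (1 + ζ * y) ^ (-1/ζ) with hφdef
  have hxstar0 : 0 < -ζ⁻¹ := by
    have h2 : ζ⁻¹ < 0 := inv_lt_zero.mpr hζ
    linarith
  have hxstar : x < -ζ⁻¹ := by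
    have h2 : -ζ⁻¹ - x = -(1 + ζ * x) / ζ := by field_simp; ring
    have h3 : 0 < -(1 + ζ * x) / ζ := div_pos_of_neg_of_neg (by linarith) hζ
    linarith
  rw [Metric.tendsto_nhds]
  intro ε hε
  -- continuity of φ at x
  have hcont : ContinuousAt φ x := by
    have hlin : ContinuousAt (fun y : ℝ => 1 + ζ * y) x :=
      (continuousAt_const.mul continuousAt_id).const_add 1
    exact hlin.rpow_const (Or.inl (ne_of_gt hx))
  obtain ⟨r, hr, hball⟩ := Metric.continuousAt_iff.1 hcont (ε/2) (by linarith)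
  -- choose `w < x < w'`
  set w := x - min r 1 / 2 with hwdef
  set w' := x + min r (min (-ζ⁻¹ - x) (-ζ⁻¹)) / 2 with hw'def
  have hm1 : 0 < min r 1 := lt_min hr one_pos
  have hm2 : 0 < min r (min (-ζ⁻¹ - x) (-ζ⁻¹)) :=
    lt_min hr (lt_min (by linarith) hxstar0)
  have hwx : w < x := by rw [hwdef]; linarith
  have hw'x : x < w' := by rw [hw'def]; linarith
  have hxw : 1 + ζ * w > 0 := by
    have h2 := mul_pos (neg_pos.mpr hζ) (sub_pos.mpr hwx)
    nlinarith [h2]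
  have hw'star : w' < -ζ⁻¹ := by
    have : min r (min (-ζ⁻¹ - x) (-ζ⁻¹)) ≤ -ζ⁻¹ - x := le_trans (min_le_right _ _) (min_le_left _ _)
    rw [hw'def]; linarith
  have hxw' : 1 + ζ * w' > 0 := by
    have h2 : ζ * w' > ζ * (-ζ⁻¹) := by
      exact mul_lt_mul_of_neg_left hw'star hζ
    rw [mul_neg, mul_inv_cancel₀ hζ0] at h2
    linarith
  have hv : 0 < w' - x := by linarith
  have hvstar : 1 + ζ * (w' - x) > 0 := by
    have hvlt : w' - x < -ζ⁻¹ := by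
      have hle : min r (min (-ζ⁻¹ - x) (-ζ⁻¹)) ≤ -ζ⁻¹ :=
        le_trans (min_le_right _ _) (min_le_right _ _)
      rw [hw'def]
      linarith
    have h2 : ζ * (-ζ⁻¹) < ζ * (w' - x) := mul_lt_mul_of_neg_left hvlt hζ
    rw [mul_neg, mul_inv_cancel₀ hζ0] at h2
    linarith
  -- bounds from continuity
  have hφw : φ w < φ x + ε := by
    have hdw : dist w x < r := by
      have h5 := min_le_left r 1
      rw [Real.dist_eq, hwdef, show x - min r 1 / 2 - x = -(min r 1 / 2) by ring,
        abs_neg, abs_of_pos (by linarith)]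
      linarith
    have h6 := hball hdw
    rw [Real.dist_eq, abs_lt] at h6
    linarith [h6.2]
  have hφw' : φ x - ε < φ w' := by
    have hdw : dist w' x < r := by
      have h5 := min_le_left r (min (-ζ⁻¹ - x) (-ζ⁻¹))
      rw [Real.dist_eq, hw'def, show x + min r (min (-ζ⁻¹ - x) (-ζ⁻¹)) / 2 - x =
        min r (min (-ζ⁻¹ - x) (-ζ⁻¹)) / 2 by ring, abs_of_pos (by linarith)]
      linarith
    have h6 := hball hdw
    rw [Real.dist_eq, abs_lt] at h6
    linarith [h6.1]
  -- bounding sequences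
  have hupseq : Tendsto (fun n : ℕ => ((n:ℝ) + 1) * (1 - F (a n * w + b n))) atTop (𝓝 (φ w)) := by
    have hrat : Tendsto (fun n : ℕ => ((n:ℝ) + 1) / (n:ℝ)) atTop (𝓝 1) := by
      have h2 := (tendsto_const_nhds (x := (1:ℝ)) (f := atTop (α := ℕ))).add inv_nat_tendsto
      rw [add_zero] at h2
      refine h2.congr' ?_
      filter_upwards [eventually_ge_atTop 1] with n hn
      have : (n:ℝ) ≠ 0 := by positivity
      field_simp
    have h2 := (hA w hxw).mul hrat
    rw [mul_one] at h2
    refine h2.congr' ?_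
    filter_upwards [eventually_ge_atTop 1] with n hn
    have : (n:ℝ) ≠ 0 := by positivity
    field_simp
  have hloseq := hA w' hxw'
  -- eventual bounds on the ratio
  have hup_ev : ∀ᶠ η in 𝓝[<] τ,
      (1 - F (η + a (N η) * x)) / (1 - F η) ≤ ((N η : ℝ) + 1) * (1 - F (a (N η) * w + b (N η))) := by
    filter_upwards [hE1 (w - x) (by linarith), eventually_mem_nhdsWithin] with η h1 h2
    obtain ⟨hN1, _, hlow⟩ := hNfacts η h2
    have hGη := hGpos η h2
    have hpt : a (N η) * w + b (N η) ≤ η + a (N η) * x := by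
      have hdist : a (N η) * (w - x) + b (N η) = a (N η) * w + b (N η) - a (N η) * x := by
        ring
      linarith
    have hnum : 1 - F (η + a (N η) * x) ≤ 1 - F (a (N η) * w + b (N η)) := by
      have := hmono hpt
      linarith
    have hinv : (1 - F η)⁻¹ < (N η : ℝ) + 1 := by
      have h3 := inv_strictAnti₀ (by positivity) hlow
      rwa [inv_inv] at h3
    calc (1 - F (η + a (N η) * x)) / (1 - F η)
        ≤ (1 - F (a (N η) * w + b (N η))) / (1 - F η) := by
          rw [div_eq_mul_inv, div_eq_mul_inv]
          exact mul_le_mul_of_nonneg_right hnum (inv_nonneg.mpr hGη.le)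
      _ = (1 - F (a (N η) * w + b (N η))) * (1 - F η)⁻¹ := div_eq_mul_inv _ _
      _ ≤ (1 - F (a (N η) * w + b (N η))) * ((N η : ℝ) + 1) := by
          refine mul_le_mul_of_nonneg_left hinv.le ?_
          linarith [hF1 (a (N η) * w + b (N η))]
      _ = ((N η : ℝ) + 1) * (1 - F (a (N η) * w + b (N η))) := mul_comm _ _
  have hlo_ev : ∀ᶠ η in 𝓝[<] τ,
      (N η : ℝ) * (1 - F (a (N η) * w' + b (N η))) ≤ (1 - F (η + a (N η) * x)) / (1 - F η) := by
    filter_upwards [hE2 (w' - x) hv hvstar, eventually_mem_nhdsWithin] with η h1 h2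
    obtain ⟨hN1, hup, _⟩ := hNfacts η h2
    have hGη := hGpos η h2
    have hpt : η + a (N η) * x ≤ a (N η) * w' + b (N η) := by
      have hdist : a (N η) * (w' - x) + b (N η) = a (N η) * w' + b (N η) - a (N η) * x := by
        ring
      linarith
    have hnum : 1 - F (a (N η) * w' + b (N η)) ≤ 1 - F (η + a (N η) * x) := by
      have := hmono hpt
      linarith
    have hinv : (N η : ℝ) ≤ (1 - F η)⁻¹ := by
      have h3 := inv_anti₀ hGη hup
      rwa [inv_inv] at h3
    calc (N η : ℝ) * (1 - F (a (N η) * w' + b (N η)))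
        = (1 - F (a (N η) * w' + b (N η))) * (N η : ℝ) := mul_comm _ _
      _ ≤ (1 - F (a (N η) * w' + b (N η))) * (1 - F η)⁻¹ := by
          refine mul_le_mul_of_nonneg_left hinv ?_
          linarith [hF1 (a (N η) * w' + b (N η))]
      _ = (1 - F (a (N η) * w' + b (N η))) / (1 - F η) := (div_eq_mul_inv _ _).symm
      _ ≤ (1 - F (η + a (N η) * x)) / (1 - F η) := by
          rw [div_eq_mul_inv, div_eq_mul_inv]
          exact mul_le_mul_of_nonneg_right hnum (inv_nonneg.mpr hGη.le)
  -- put everything together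
  have hUtend := (hupseq.comp hNtend).eventually_lt_const hφw
  have hLtend := (hloseq.comp hNtend).eventually_const_lt hφw'
  filter_upwards [hup_ev, hlo_ev, hUtend, hLtend] with η e1 e2 e3 e4
  rw [Real.dist_eq, abs_lt]
  simp only [Function.comp] at e3 e4
  constructor
  · linarith [e2, e4]
  · linarith [e1, e3]


/-- Pickands–Balkema–de Haan theorem, case ζ < 0 (finite right endpoint τ). -/
theorem pickands_balkema_deHaan_neg
    (ζ : ℝ) (hζ : ζ < 0) (τ : ℝ) (F : ℝ → ℝ)
    (hmono : Monotone F)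
    (hrc : ∀ x : ℝ, ContinuousWithinAt F (Set.Ici x) x)
    (hbot : Tendsto F atBot (𝓝 0))
    (htop : Tendsto F atTop (𝓝 1))
    (hlt : ∀ x : ℝ, x < τ → F x < 1)
    (heq : ∀ x : ℝ, τ ≤ x → F x = 1) :
    (∃ (a b : ℕ → ℝ), (∀ n, 0 < a n) ∧
      ∀ x : ℝ, 1 + ζ * x > 0 →
        Tendsto (fun n : ℕ => (F (a n * x + b n)) ^ n) atTop
          (𝓝 (Real.exp (-((1 + ζ * x) ^ (-1 / ζ)))))) ↔
    (∃ δ : ℝ → ℝ, (∀ᶠ η in 𝓝[<] τ, 0 < δ η) ∧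
      ∀ x : ℝ, 1 + ζ * x > 0 →
        Tendsto (fun η : ℝ => (1 - F (η + δ η * x)) / (1 - F η)) (𝓝[<] τ)
          (𝓝 ((1 + ζ * x) ^ (-1 / ζ)))) := by
  constructor
  · rintro ⟨a, b, hapos, hab⟩
    exact dir_i_to_ii ζ hζ τ F hmono hbot hlt heq a b hapos hab
  · rintro ⟨δ, hδpos, hδ⟩
    exact dir_ii_to_i ζ hζ τ F hmono hrc hbot hlt heq δ hδpos hδ
end

section
/- Let d be a positive natural number and let W be a d×d real matrix. Let A := W ∘ W be the Hadamard (entrywise) product of W with itself, so A(i,j) = W(i,j)². Then trace(exp(A)) = d if and only if the directed graph on vertices {1,…,d} with an edge from i to j whenever W(i,j) ≠ 0 has no directed cycle, i.e., if and only if there exist no k ≥ 1 and indices v_0, v_1, …, v_k with v_k = v_0 and W(v_i, v_{i+1}) ≠ 0 for all 0 ≤ i < k. -/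
open Matrix

attribute [local instance] Matrix.linftyOpNormedRing Matrix.linftyOpNormedAlgebra

lemma pow_entry_nonneg {d : ℕ} (A : Matrix (Fin d) (Fin d) ℝ)
    (h : ∀ i j, 0 ≤ A i j) (n : ℕ) : ∀ i j, 0 ≤ (A ^ n) i j := by
  induction n with
  | zero =>
    intro i j
    rw [pow_zero]
    by_cases hij : i = j <;> simp [Matrix.one_apply, hij]
  | succ n ih =>
    intro i j
    rw [pow_succ, Matrix.mul_apply]
    exact Finset.sum_nonneg fun u _ => mul_nonneg (ih i u) (h u j)

lemma pow_entry_pos {d : ℕ} (A : Matrix (Fin d) (Fin d) ℝ)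
    (h : ∀ i j, 0 ≤ A i j) (v : ℕ → Fin d) :
    ∀ k, (∀ i < k, 0 < A (v i) (v (i + 1))) → 0 < (A ^ k) (v 0) (v k) := by
  intro k
  induction k with
  | zero => intro _; simp [Matrix.one_apply]
  | succ k ih =>
    intro hp
    rw [pow_succ, Matrix.mul_apply]
    refine Finset.sum_pos' (fun u _ => mul_nonneg (pow_entry_nonneg A h k _ u) (h u _)) ?_
    exact ⟨v k, Finset.mem_univ _,
      mul_pos (ih fun i hi => hp i (Nat.lt_succ_of_lt hi)) (hp k (Nat.lt_succ_self k))⟩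

lemma exists_path {d : ℕ} (A : Matrix (Fin d) (Fin d) ℝ) (n : ℕ) (a : Fin d) :
    ∀ b : Fin d, (A ^ n) a b ≠ 0 →
    ∃ v : ℕ → Fin d, v 0 = a ∧ v n = b ∧ ∀ i < n, A (v i) (v (i + 1)) ≠ 0 := by
  induction n with
  | zero =>
    intro b hb
    rw [pow_zero, Matrix.one_apply] at hb
    have hab : a = b := by by_contra hne; simp [hne] at hb
    exact ⟨fun _ => a, rfl, hab, by omega⟩
  | succ n ih =>
    intro b hb
    rw [pow_succ, Matrix.mul_apply] at hb
    obtain ⟨u, _, hu⟩ := Finset.exists_ne_zero_of_sum_ne_zero hb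
    rw [mul_ne_zero_iff] at hu
    obtain ⟨v, hv0, hvn, hve⟩ := ih u hu.1
    refine ⟨fun i => if i ≤ n then v i else b, by simp [hv0], by simp, ?_⟩
    intro i hi
    rcases Nat.lt_succ_iff_lt_or_eq.mp hi with hi | hi
    · simpa [Nat.le_of_lt hi, Nat.succ_le_of_lt hi] using hve i hi
    · subst hi
      simpa [hvn] using hu.2

/-- Acyclicity characterization: tr(exp(W ∘ W)) = d iff the graph of nonzero
entries of W has no directed cycle. -/
theorem trace_exp_hadamard_eq_iff_acyclic
    (d : ℕ) (hd : 0 < d) (W : Matrix (Fin d) (Fin d) ℝ)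
    (A : Matrix (Fin d) (Fin d) ℝ) (hA : ∀ i j, A i j = (W i j) ^ 2) :
    Matrix.trace (NormedSpace.exp A) = (d : ℝ) ↔
      ¬ ∃ (k : ℕ) (v : ℕ → Fin d), 1 ≤ k ∧ v k = v 0 ∧
        ∀ i < k, W (v i) (v (i + 1)) ≠ 0 := by
  have hnn : ∀ i j, 0 ≤ A i j := fun i j => (hA i j) ▸ sq_nonneg _
  have hsum : Summable (fun n : ℕ => ((n.factorial : ℝ))⁻¹ • A ^ n) :=
    NormedSpace.expSeries_summable' A
  let T : Matrix (Fin d) (Fin d) ℝ →L[ℝ] ℝ :=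
    LinearMap.toContinuousLinearMap (Matrix.traceLinearMap (Fin d) ℝ ℝ)
  have hT : ∀ M : Matrix (Fin d) (Fin d) ℝ, T M = Matrix.trace M := fun _ => rfl
  set f : ℕ → ℝ := fun n => ((n.factorial : ℝ))⁻¹ * Matrix.trace (A ^ n) with hf
  have hfs : Summable f := by
    refine (hsum.map T.toLinearMap.toAddMonoidHom T.continuous).congr fun n => ?_
    simp [hf, Function.comp, hT, Matrix.trace_smul, smul_eq_mul]
  have htr : Matrix.trace (NormedSpace.exp A) = ∑' n : ℕ, f n := by
    have h1 : NormedSpace.exp A = ∑' n : ℕ, ((n.factorial : ℝ))⁻¹ • A ^ n := by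
      rw [NormedSpace.exp_eq_tsum ℝ]
    rw [← hT, h1, T.map_tsum hsum]
    simp [hf, hT, Matrix.trace_smul, smul_eq_mul]
  have hfnn : ∀ n, 0 ≤ f n := by
    intro n
    apply mul_nonneg (by positivity)
    exact Finset.sum_nonneg fun u _ => pow_entry_nonneg A hnn n u u
  have hf0 : f 0 = (d : ℝ) := by
    simp [hf, Matrix.trace_one]
  have hfs' : Summable fun n => f (n + 1) :=
    hfs.comp_injective (add_left_injective 1)
  have key : Matrix.trace (NormedSpace.exp A) = (d : ℝ) ↔ ∀ n, f (n + 1) = 0 := by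
    rw [htr, Summable.tsum_eq_zero_add hfs, hf0]
    constructor
    · intro h
      have hz : ∑' n, f (n + 1) = 0 := by linarith
      intro n
      have hle : f (n + 1) ≤ ∑' n, f (n + 1) :=
        Summable.le_tsum hfs' n fun j _ => hfnn _
      have := hfnn (n + 1)
      linarith [hle.trans_eq hz]
    · intro h
      have : ∑' n, f (n + 1) = 0 := by simp [h]
      rw [this, add_zero]
  rw [key]
  constructor
  · -- all traces zero → no cycle
    rintro h ⟨k, v, hk, hvk, hW⟩
    obtain ⟨k', rfl⟩ : ∃ k', k = k' + 1 := ⟨k - 1, by omega⟩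
    have hpos : 0 < (A ^ (k' + 1)) (v 0) (v (k' + 1)) := by
      apply pow_entry_pos A hnn v
      intro i hi
      rw [hA]
      exact lt_of_le_of_ne (sq_nonneg _) (Ne.symm (pow_ne_zero 2 (hW i hi)))
    rw [hvk] at hpos
    have htrpos : 0 < Matrix.trace (A ^ (k' + 1)) := by
      have hle : (A ^ (k' + 1)) (v 0) (v 0) ≤ Matrix.trace (A ^ (k' + 1)) :=
        Finset.single_le_sum (fun u _ => pow_entry_nonneg A hnn (k' + 1) u u)
          (Finset.mem_univ (v 0))
      linarith
    have := h k'
    rw [hf] at this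
    have hfac : ((k' + 1).factorial : ℝ)⁻¹ ≠ 0 := by positivity
    have : Matrix.trace (A ^ (k' + 1)) = 0 := by
      field_simp at this
      simpa using this
    linarith
  · -- no cycle → all traces zero
    intro hnc n
    have htr0 : Matrix.trace (A ^ (n + 1)) = 0 := by
      apply Finset.sum_eq_zero
      intro u _
      by_contra h0
      obtain ⟨v, hv0, hvn, hve⟩ := exists_path A (n + 1) u u h0
      refine hnc ⟨n + 1, v, by omega, by rw [hvn, hv0], ?_⟩
      intro i hi hw
      exact hve i hi (by rw [hA, hw]; ring)
    simp [hf, htr0]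
end

section
/- Let d be a natural number and let A be a d×d real matrix all of whose entries are nonnegative. Then trace(exp(A)) = d if and only if trace(A^k) = 0 for every natural number k ≥ 1. -/
open Matrix
open scoped Nat

attribute [local instance] Matrix.linftyOpNormedRing Matrix.linftyOpNormedAlgebra
  Matrix.linftyOpNormedAddCommGroup Matrix.linftyOpNormedSpace

/-- For an entrywise-nonnegative matrix A, tr(exp(A)) = d iff tr(A^k) = 0 for
all k ≥ 1. -/
theorem trace_exp_eq_iff_trace_pow_eq_zero
    (d : ℕ) (A : Matrix (Fin d) (Fin d) ℝ) (hA : ∀ i j, 0 ≤ A i j) :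
    Matrix.trace (NormedSpace.exp A) = (d : ℝ) ↔
      ∀ k : ℕ, 1 ≤ k → Matrix.trace (A ^ k) = 0 := by
  have hpow : ∀ k : ℕ, ∀ i j, 0 ≤ (A ^ k) i j := by
    intro k
    induction k with
    | zero => intro i j; simp [Matrix.one_apply]; positivity
    | succ n ih =>
      intro i j
      rw [pow_succ, Matrix.mul_apply]
      exact Finset.sum_nonneg fun l _ => mul_nonneg (ih i l) (hA l j)
  have htr : ∀ k : ℕ, 0 ≤ Matrix.trace (A ^ k) := fun k =>
    Finset.sum_nonneg fun i _ => hpow k i i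
  set f : ℕ → ℝ := fun n => (n.factorial : ℝ)⁻¹ • Matrix.trace (A ^ n) with hf
  have hfnn : ∀ n, 0 ≤ f n := fun n => by
    exact smul_nonneg (by positivity) (htr n)
  have hsum : Summable fun n : ℕ => (n !⁻¹ : ℝ) • A ^ n :=
    NormedSpace.expSeries_summable' (𝕂 := ℝ) A
  let T := LinearMap.toContinuousLinearMap (Matrix.traceLinearMap (Fin d) ℝ ℝ)
  have hsumf : Summable f := by
    have := hsum.map T T.continuous
    simpa [f, T, Matrix.traceLinearMap, Function.comp_def, Matrix.trace_smul, smul_eq_mul] using this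
  have hexp : Matrix.trace (NormedSpace.exp A) = ∑' n, f n := by
    rw [NormedSpace.exp_eq_tsum (𝕂 := ℝ)]
    have := T.map_tsum hsum
    simpa [f, T, Matrix.traceLinearMap, Function.comp_def, Matrix.trace_smul, smul_eq_mul] using this
  have hf0 : f 0 = d := by simp [f, Matrix.trace_one]
  have hsplit : ∑' n, f n = f 0 + ∑' n, f (n + 1) :=
    (Summable.tsum_eq_zero_add hsumf)
  have hsumf1 : Summable fun n => f (n + 1) := by
    exact (summable_nat_add_iff 1).2 hsumf
  rw [hexp, hsplit, hf0]
  constructor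
  · intro h k hk
    have htail : ∑' n, f (n + 1) = 0 := by linarith
    obtain ⟨n, rfl⟩ : ∃ n, k = n + 1 := ⟨k - 1, by omega⟩
    have hle : f (n + 1) ≤ ∑' m, f (m + 1) :=
      Summable.le_tsum hsumf1 n fun m _ => hfnn _
    have : f (n + 1) = 0 := le_antisymm (htail ▸ hle) (hfnn _)
    have hfac : ((n + 1).factorial : ℝ) ≠ 0 := by positivity
    simpa [f, hfac] using this
  · intro h
    have : ∀ n, f (n + 1) = 0 := fun n => by
      simp [f, h (n + 1) (by omega)]
    simp [tsum_congr this]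
end
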